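/- Let v_{−1}, v_0, v_1, v_2, … be complex numbers satisfying the cubic relation (1/4)·v_{−1}³ − v_0·v_{−1} + v_1 = 0, and let v = 2T^{−2} + Σ_{n≥−1} v_n T^n be the corresponding formal Laurent series over ℂ. Then there exists a formal power series U ∈ ℂ[[T]] such that, with u = −T^{−1} + U, one has u² + u′ = v (formal derivative in T). -/

import Mathlib

open Finset in
/-- Recursively defined coefficients of the Miura datum. -/
noncomputable def mcoef (v : ℤ → ℂ) : ℕ → ℂ
  | 0 => -v (-1) / 2
  | (n+1) => if n = 1 then 0 else
      (v n - ∑ k ∈ (Finset.range (n+1)).attach,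
        mcoef v k.1 * mcoef v (n - k.1)) / ((n : ℂ) - 1)
  decreasing_by
  · exact Finset.mem_range.mp k.2
  · omega

lemma mcoef_zero (v : ℤ → ℂ) : mcoef v 0 = -v (-1) / 2 := by rw [mcoef]

lemma mcoef_succ (v : ℤ → ℂ) (n : ℕ) : mcoef v (n+1) = if n = 1 then 0 else
    (v n - ∑ k ∈ Finset.range (n+1), mcoef v k * mcoef v (n - k)) / ((n : ℂ) - 1) := by
  rw [mcoef, Finset.sum_attach (Finset.range (n+1)) (fun k => mcoef v k * mcoef v (n - k))]

lemma ofPowerSeries_coeff_neg (f : PowerSeries ℂ) (n : ℤ) (hn : n < 0) :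
    (HahnSeries.ofPowerSeries ℤ ℂ f).coeff n = 0 := by
  rw [HahnSeries.ofPowerSeries_apply, HahnSeries.embDomain_notin_range]
  rintro ⟨m, hm⟩
  change (m : ℤ) = n at hm
  omega

/-- The formal derivative of a Laurent series: `(Σ aₙ Tⁿ)' = Σ n aₙ Tⁿ⁻¹`. -/
noncomputable def lderiv (f : LaurentSeries ℂ) : LaurentSeries ℂ :=
  HahnSeries.single (-1 : ℤ) (1 : ℂ) *
    { coeff := fun n => (n : ℂ) * f.coeff n
      isPWO_support' := f.isPWO_support'.mono (by
        intro n hn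
        simp only [Function.mem_support] at hn ⊢
        exact fun h => hn (by rw [h, mul_zero])) }

lemma sW_coeff (x : LaurentSeries ℂ) (n : ℤ) :
    (HahnSeries.single (-1:ℤ) (1:ℂ) * x).coeff n = x.coeff (n+1) := by
  rw [show n = (n+1) + (-1) by ring, HahnSeries.coeff_single_mul_add, one_mul]
  ring_nf

lemma lderiv_coeff (f : LaurentSeries ℂ) (n : ℤ) :
    (lderiv f).coeff n = ((n+1 : ℤ) : ℂ) * f.coeff (n+1) := by
  rw [lderiv, sW_coeff]

/-- Any Laurent series `v = 2T⁻² + Σ_{n ≥ -1} vₙ Tⁿ` whose coefficients satisfy the cubic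
relation `(1/4)v₋₁³ - v₀v₋₁ + v₁ = 0` is the Miura transformation `u² + u'` of a Miura
datum `u = -T⁻¹ + U` with `U ∈ ℂ[[T]]`. -/
theorem exists_miura_datum_of_cubic (V : LaurentSeries ℂ)
    (h₂ : V.coeff (-2) = 2)
    (hlow : ∀ n : ℤ, n < -2 → V.coeff n = 0)
    (hcubic : (1 / 4 : ℂ) * (V.coeff (-1)) ^ 3 - V.coeff 0 * V.coeff (-1) + V.coeff 1 = 0) :
    ∃ U : PowerSeries ℂ,
      (-(HahnSeries.single (-1 : ℤ) (1 : ℂ)) + HahnSeries.ofPowerSeries ℤ ℂ U) ^ 2 +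
        lderiv (-(HahnSeries.single (-1 : ℤ) (1 : ℂ)) + HahnSeries.ofPowerSeries ℤ ℂ U) = V := by
  set v := V.coeff with hv
  set c := mcoef v with hc
  set U : PowerSeries ℂ := PowerSeries.mk c with hU
  set s : LaurentSeries ℂ := HahnSeries.single (-1 : ℤ) (1 : ℂ) with hs
  set W : LaurentSeries ℂ := HahnSeries.ofPowerSeries ℤ ℂ U with hW
  refine ⟨U, ?_⟩
  have hss : s * s = HahnSeries.single (-2 : ℤ) (1:ℂ) := by
    rw [hs, HahnSeries.single_mul_single]; norm_num
  have hexp : (-s + W)^2 = HahnSeries.single (-2 : ℤ) (1:ℂ) - 2*(s*W) +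
      (HahnSeries.ofPowerSeries ℤ ℂ (U*U)) := by
    rw [map_mul, ← hW, ← hss]; ring
  ext n
  have key : ((-s + W)^2 + lderiv (-s+W)).coeff n =
      (if n = -2 then 1 else 0) - 2 * W.coeff (n+1)
      + (HahnSeries.ofPowerSeries ℤ ℂ (U*U)).coeff n
      + ((n+1:ℤ):ℂ) * (-(if n+1 = -1 then (1:ℂ) else 0) + W.coeff (n+1)) := by
    have h2m : ((2:LaurentSeries ℂ)*(s*W)).coeff n = 2*(s*W).coeff n := by
      rw [two_mul, HahnSeries.coeff_add]; ring
    rw [HahnSeries.coeff_add, hexp, lderiv_coeff, HahnSeries.coeff_add, HahnSeries.coeff_sub,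
      HahnSeries.coeff_add, h2m, sW_coeff]
    simp [hs, HahnSeries.coeff_single, map_mul]
    ring_nf
  rw [key, ← hv]
  rcases lt_trichotomy n (-2) with hn | rfl | hn
  · have hW1 : W.coeff (n+1) = 0 := ofPowerSeries_coeff_neg _ _ (by omega)
    have hUU : (HahnSeries.ofPowerSeries ℤ ℂ (U*U)).coeff n = 0 :=
      ofPowerSeries_coeff_neg _ _ (by omega)
    rw [hW1, hUU, hlow n hn]
    simp [show n ≠ -2 by omega, show n+1 ≠ -1 by omega]
  · have hW1 : W.coeff (-2+1) = 0 := ofPowerSeries_coeff_neg _ _ (by omega)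
    have hUU : (HahnSeries.ofPowerSeries ℤ ℂ (U*U)).coeff (-2) = 0 :=
      ofPowerSeries_coeff_neg _ _ (by omega)
    rw [hW1, hUU, h₂]
    norm_num
  · rcases eq_or_lt_of_le (by omega : (-1:ℤ) ≤ n) with h1 | h0
    · obtain rfl : n = -1 := h1.symm
      have hW1 : W.coeff (-1+1) = c 0 := by
        rw [show (-1+1 : ℤ) = ((0:ℕ):ℤ) by norm_num, hW,
          HahnSeries.ofPowerSeries_apply_coeff, hU, PowerSeries.coeff_mk]
      have hUU : (HahnSeries.ofPowerSeries ℤ ℂ (U*U)).coeff (-1) = 0 :=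
        ofPowerSeries_coeff_neg _ _ (by omega)
      rw [hW1, hUU, hc, mcoef_zero]
      norm_num
      ring
    · obtain ⟨m, rfl⟩ := Int.eq_ofNat_of_zero_le (by omega : (0:ℤ) ≤ n)
      have hW1 : W.coeff ((m:ℤ)+1) = c (m+1) := by
        rw [show ((m:ℤ)+1 : ℤ) = ((m+1:ℕ):ℤ) by push_cast; ring, hW,
          HahnSeries.ofPowerSeries_apply_coeff, hU, PowerSeries.coeff_mk]
      have hUU : (HahnSeries.ofPowerSeries ℤ ℂ (U*U)).coeff (m:ℤ)
          = ∑ k ∈ Finset.range (m+1), c k * c (m-k) := by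
        rw [show ((m:ℤ)) = ((m:ℕ):ℤ) by norm_num,
          HahnSeries.ofPowerSeries_apply_coeff, PowerSeries.coeff_mul,
          Finset.Nat.sum_antidiagonal_eq_sum_range_succ_mk]
        simp [hU, PowerSeries.coeff_mk]
      rw [hW1, hUU]
      rw [if_neg (show ¬((m:ℤ) = -2) by omega), if_neg (show ¬((m:ℤ)+1 = -1) by omega)]
      push_cast
      by_cases hm : m = 1
      · subst hm
        have hc2 : c 2 = 0 := by rw [hc, mcoef_succ]; norm_num
        have hc1 : c 1 = (v 0 - c 0 * c 0) / (0 - 1) := by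
          rw [hc, mcoef_succ]; simp [Finset.sum_range_one, ← hc]
        have hc0 : c 0 = -v (-1) / 2 := mcoef_zero v
        rw [show (1+1 : ℕ) = 2 by norm_num, hc2]
        rw [Finset.sum_range_succ, Finset.sum_range_one]
        norm_num
        rw [hc1, hc0]
        field_simp
        linear_combination (8:ℂ) * hcubic
      · have hcm : c (m+1) = (v m - ∑ k ∈ Finset.range (m+1), c k * c (m-k)) / ((m:ℂ) - 1) := by
          rw [hc, mcoef_succ, if_neg hm]
        have hne : (m:ℂ) - 1 ≠ 0 := sub_ne_zero.mpr (by exact_mod_cast hm)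
        rw [hcm]
        field_simp
        ring
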